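/- Let λ ∈ (0, 1/2), p > 2, δ > 0, l ≥ 0. Define ψ(u) = (1/δ) ∫_l^u s^{1/p} (1 + (s-l)/δ)^{-(1-λ)/p} ((s-l)/δ)^{-2λ/p} ds for u ≥ l. Then for any ε ∈ (0,1) there exist constants 0 < c(ε) ≤ C(ε) such that for all u ≥ l with (u-l)/δ ≥ ε: c(ε) ψ(u)^{ρ(λ)} ≤ u^{1/(p-1-λ)} ((u-l)/δ) ≤ C(ε) ψ(u)^{ρ(λ)}, where ρ(λ) = p/(p-1-λ). -/

import Mathlib

open Real MeasureTheory intervalIntegral Set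

set_option maxHeartbeats 1000000 in
/-- two-sided comparability of ψ(u)^{ρ(λ)} with u^{1/(p-1-λ)}(u-l)/δ. -/
theorem psi_comparable (p lam δ l : ℝ) (hp : 2 < p) (hlam : lam ∈ Set.Ioo (0:ℝ) (1/2))
    (hplam : 0 < p - 1 - lam) (hδ : 0 < δ) (hl : 0 ≤ l)
    (ε : ℝ) (hε : ε ∈ Set.Ioo (0:ℝ) 1) :
    ∃ c C : ℝ, 0 < c ∧ c ≤ C ∧ ∀ u, l ≤ u → ε ≤ (u - l) / δ →
      c * ((1/δ) * ∫ s in l..u,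
            s ^ (1/p) * (1 + (s - l)/δ) ^ (-(1 - lam)/p) * ((s - l)/δ) ^ (-(2 * lam)/p))
          ^ (p / (p - 1 - lam))
        ≤ u ^ (1/(p - 1 - lam)) * ((u - l)/δ)
      ∧ u ^ (1/(p - 1 - lam)) * ((u - l)/δ)
        ≤ C * ((1/δ) * ∫ s in l..u,
            s ^ (1/p) * (1 + (s - l)/δ) ^ (-(1 - lam)/p) * ((s - l)/δ) ^ (-(2 * lam)/p))
          ^ (p / (p - 1 - lam)) := by
  obtain ⟨hlam0, hlam2⟩ := hlam
  obtain ⟨hε0, hε1⟩ := hε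
  have hp0 : (0:ℝ) < p := by linarith
  have hpne : p ≠ 0 := ne_of_gt hp0
  set b : ℝ := -(1 - lam)/p with hb_def
  set ce : ℝ := -(2 * lam)/p with hce_def
  set aexp : ℝ := -(1 + lam)/p with ha_def
  have hb_neg : b ≤ 0 := by
    rw [hb_def]; apply div_nonpos_of_nonpos_of_nonneg <;> linarith
  have hc_neg : ce ≤ 0 := by
    rw [hce_def]; apply div_nonpos_of_nonpos_of_nonneg <;> linarith
  have hce_ne : ce ≠ 0 := by
    rw [hce_def]; exact div_ne_zero (ne_of_lt (by linarith)) hpne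
  have ha1 : (-1:ℝ) < aexp := by
    rw [ha_def]
    have h1 : (1 + lam)/p < 1 := (div_lt_one hp0).2 (by linarith)
    have h2 : -(1 + lam)/p = -((1 + lam)/p) := by ring
    rw [h2]; linarith
  have ha1pos : 0 < aexp + 1 := by linarith
  have ha1ne : aexp + 1 ≠ 0 := ne_of_gt ha1pos
  have ha_ne : aexp ≠ 0 := by
    rw [ha_def]; exact div_ne_zero (ne_of_lt (by linarith)) hpne
  have hbc : b + ce = aexp := by rw [hb_def, hce_def, ha_def]; field_simp; ring
  have ha1eq : aexp + 1 = (p - 1 - lam)/p := by rw [ha_def]; field_simp; ring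
  -- constants
  set ρ : ℝ := p / (p - 1 - lam) with hρ_def
  have hρ : 0 < ρ := div_pos hp0 hplam
  set c1 : ℝ := (1/2) * (1/2 : ℝ) ^ (1/p) * (1 + 1/ε) ^ b with hc1_def
  have hc1 : 0 < c1 := by
    apply mul_pos (mul_pos (by norm_num) (rpow_pos_of_pos (by norm_num) _))
    exact rpow_pos_of_pos (by positivity) _
  refine ⟨min (ρ ^ (-ρ)) (c1 ^ (-ρ)), max (ρ ^ (-ρ)) (c1 ^ (-ρ)),
    lt_min (rpow_pos_of_pos hρ _) (rpow_pos_of_pos hc1 _), min_le_max, ?_⟩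
  intro u hu hXε
  set X : ℝ := (u - l)/δ with hX_def
  have hX : 0 < X := lt_of_lt_of_le hε0 hXε
  have hulX : u - l = X * δ := by rw [hX_def]; field_simp
  have hul : l < u := by nlinarith [mul_pos hX hδ]
  have hu0 : 0 < u := lt_of_le_of_lt hl hul
  set f : ℝ → ℝ := fun s => s ^ (1/p) * (1 + (s - l)/δ) ^ b * ((s - l)/δ) ^ ce with hf_def
  set g : ℝ → ℝ := fun s => u ^ (1/p) * ((s - l)/δ) ^ aexp with hg_def
  -- pointwise bound f ≤ g strictly inside
  have hfg : ∀ x, l < x → x ≤ u → f x ≤ g x := by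
    intro x hlx hxu
    have hx0 : 0 < x := lt_of_le_of_lt hl hlx
    have hx' : 0 < (x - l)/δ := div_pos (by linarith) hδ
    have t1 : x ^ (1/p) ≤ u ^ (1/p) := rpow_le_rpow hx0.le hxu (by positivity)
    have t2 : (1 + (x - l)/δ) ^ b ≤ ((x - l)/δ) ^ b :=
      rpow_le_rpow_of_nonpos hx' (by linarith) hb_neg
    calc f x = x ^ (1/p) * ((1 + (x - l)/δ) ^ b * ((x - l)/δ) ^ ce) := by
          simp only [hf_def]; ring
      _ ≤ u ^ (1/p) * (((x - l)/δ) ^ b * ((x - l)/δ) ^ ce) := by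
          apply mul_le_mul t1 _ _ (rpow_nonneg hu0.le _)
          · exact mul_le_mul_of_nonneg_right t2 (rpow_nonneg hx'.le _)
          · exact mul_nonneg (rpow_nonneg (by linarith [hx']) _) (rpow_nonneg hx'.le _)
      _ = g x := by simp only [hg_def]; rw [← rpow_add hx', hbc]
  -- nonnegativity of f
  have hf_nn : ∀ x, l ≤ x → 0 ≤ f x := by
    intro x hlx
    have h1 : (0:ℝ) ≤ x := le_trans hl hlx
    have h2 : (0:ℝ) ≤ (x - l)/δ := div_nonneg (by linarith) hδ.le
    have h3 : (0:ℝ) ≤ 1 + (x - l)/δ := by linarith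
    exact mul_nonneg (mul_nonneg (rpow_nonneg h1 _) (rpow_nonneg h3 _)) (rpow_nonneg h2 _)
  -- integrability of g
  have hg0_int : IntervalIntegrable (fun x : ℝ => x ^ aexp) volume 0 X :=
    intervalIntegrable_rpow' ha1
  have hpow_int : IntervalIntegrable (fun x : ℝ => ((x - l)/δ) ^ aexp) volume l u := by
    have h1 := (hg0_int.comp_mul_right (c := δ⁻¹)).comp_sub_right l
    have e2 : u = X * δ + l := by linarith [hulX]
    simpa [div_eq_mul_inv, e2] using h1
  have hg_int : IntervalIntegrable g volume l u := by
    simp only [hg_def]; exact hpow_int.const_mul _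
  -- integrability of f
  have hf_int : IntervalIntegrable f volume l u := by
    apply hg_int.mono_fun
    · apply ContinuousOn.aestronglyMeasurable _ measurableSet_uIoc
      rw [uIoc_of_le hul.le]
      intro x hx
      apply ContinuousAt.continuousWithinAt
      have hx0 : 0 < x := lt_of_le_of_lt hl hx.1
      have hx' : 0 < (x - l)/δ := div_pos (by linarith [hx.1]) hδ
      have cb : ContinuousAt (fun s : ℝ => (s - l)/δ) x :=
        ((continuousAt_id.sub continuousAt_const).div_const δ)
      have d1 : ContinuousAt (fun s : ℝ => s ^ (1/p)) x :=
        continuousAt_id.rpow_const (Or.inl hx0.ne')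
      have d2 : ContinuousAt (fun s : ℝ => (1 + (s - l)/δ) ^ b) x :=
        (continuousAt_const.add cb).rpow_const (Or.inl (by linarith [hx'] : (1:ℝ) + (x - l)/δ ≠ 0))
      have d3 : ContinuousAt (fun s : ℝ => ((s - l)/δ) ^ ce) x :=
        cb.rpow_const (Or.inl hx'.ne')
      exact (d1.mul d2).mul d3
    · rw [uIoc_of_le hul.le]
      filter_upwards [self_mem_ae_restrict (measurableSet_Ioc : MeasurableSet (Ioc l u))]
        with x hx
      have h1 := hf_nn x hx.1.le
      have h2 := hfg x hx.1 hx.2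
      rw [Real.norm_eq_abs, Real.norm_eq_abs, abs_of_nonneg h1, abs_of_nonneg (le_trans h1 h2)]
      exact h2
  -- upper bound on the integral
  have hInt_le : (∫ s in l..u, f s) ≤ ∫ s in l..u, g s := by
    apply integral_mono_on hul.le hf_int hg_int
    intro x hx
    rcases eq_or_lt_of_le hx.1 with h | h
    · simp [hf_def, hg_def, ← h, sub_self, zero_div, Real.zero_rpow hce_ne,
        Real.zero_rpow ha_ne]
    · exact hfg x h hx.2
  have hg_val : (∫ s in l..u, g s) = u ^ (1/p) * (δ * (X ^ (aexp + 1) / (aexp + 1))) := by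
    simp only [hg_def]
    rw [intervalIntegral.integral_const_mul]
    congr 1
    have e1 := integral_comp_sub_right (a := l) (b := u) (fun s => (s/δ) ^ aexp) l
    try simp only at e1
    rw [e1]
    have e2 : (∫ s in l - l..u - l, (s/δ) ^ aexp) = ∫ s in (0:ℝ)..X * δ, (s * δ⁻¹) ^ aexp := by
      simp [div_eq_mul_inv, hulX]
    rw [e2]
    rw [integral_comp_mul_right (fun x => x ^ aexp) (inv_ne_zero hδ.ne')]
    have e3 : X * δ * δ⁻¹ = X := by field_simp
    rw [zero_mul, e3, integral_rpow (Or.inl ha1), Real.zero_rpow ha1ne]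
    rw [smul_eq_mul, inv_inv]
    ring
  -- lower bound on the integral
  set m : ℝ := (l + u)/2 with hm_def
  have hlm : l ≤ m := by rw [hm_def]; linarith
  have hmu : m ≤ u := by rw [hm_def]; linarith
  have hf_int_lm : IntervalIntegrable f volume l m :=
    hf_int.mono_set' (by rw [uIoc_of_le hlm, uIoc_of_le hul.le]; exact Ioc_subset_Ioc le_rfl hmu)
  have hf_int_mu : IntervalIntegrable f volume m u :=
    hf_int.mono_set' (by rw [uIoc_of_le hmu, uIoc_of_le hul.le]; exact Ioc_subset_Ioc hlm le_rfl)
  set K : ℝ := (u/2) ^ (1/p) * ((1 + 1/ε) * X) ^ b * X ^ ce with hK_def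
  have hK_le : ∀ x ∈ Icc m u, K ≤ f x := by
    intro x hx
    have hxm : m ≤ x := hx.1
    have hxu : x ≤ u := hx.2
    have hu2 : u/2 ≤ x := by rw [hm_def] at hxm; linarith
    have hx0 : 0 < x := lt_of_lt_of_le (by linarith) hu2
    have hx'pos : 0 < (x - l)/δ := by
      apply div_pos _ hδ
      rw [hm_def] at hxm; linarith
    have hx'le : (x - l)/δ ≤ X := by
      rw [hX_def]
      gcongr
    have hXe : 1 ≤ X * (1/ε) := by
      have h' : 1 ≤ X/ε := (one_le_div hε0).2 hXε
      calc (1:ℝ) ≤ X/ε := h'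
        _ = X * (1/ε) := by ring
    have t1 : (u/2) ^ (1/p) ≤ x ^ (1/p) := rpow_le_rpow (by positivity) hu2 (by positivity)
    have t2 : ((1 + 1/ε) * X) ^ b ≤ (1 + (x - l)/δ) ^ b := by
      apply rpow_le_rpow_of_nonpos (by linarith [hx'pos]) _ hb_neg
      nlinarith
    have t3 : X ^ ce ≤ ((x - l)/δ) ^ ce :=
      rpow_le_rpow_of_nonpos hx'pos hx'le hc_neg
    simp only [hK_def, hf_def]
    apply mul_le_mul _ t3 (rpow_nonneg hX.le _) _
    · apply mul_le_mul t1 t2 (rpow_nonneg (by positivity) _) (rpow_nonneg hx0.le _)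
    · exact mul_nonneg (rpow_nonneg hx0.le _) (rpow_nonneg (by linarith [hx'pos]) _)
  have hlow : K * (u - m) ≤ ∫ s in l..u, f s := by
    have h1 : K * (u - m) ≤ ∫ s in m..u, f s := by
      have h := integral_mono_on hmu (intervalIntegrable_const (μ := volume) (c := K)) hf_int_mu hK_le
      rw [intervalIntegral.integral_const, smul_eq_mul] at h
      linarith [h]
    have h2 : (0:ℝ) ≤ ∫ s in l..m, f s := by
      apply integral_nonneg hlm
      intro x hx
      exact hf_nn x hx.1
    have h3 : (∫ s in l..u, f s) = (∫ s in l..m, f s) + ∫ s in m..u, f s :=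
      (integral_add_adjacent_intervals hf_int_lm hf_int_mu).symm
    linarith
  -- put together: ψ comparisons
  set A : ℝ := u ^ (1/p) * X ^ ((p - 1 - lam)/p) with hA_def
  have hA : 0 < A := by
    rw [hA_def]
    exact mul_pos (rpow_pos_of_pos hu0 _) (rpow_pos_of_pos hX _)
  set ψ : ℝ := (1/δ) * ∫ s in l..u, f s with hψ_def
  have hψ_up : ψ ≤ ρ * A := by
    rw [hψ_def, hρ_def, hA_def]
    have h1 : (1/δ) * (∫ s in l..u, f s) ≤ (1/δ) * ∫ s in l..u, g s := by
      apply mul_le_mul_of_nonneg_left hInt_le (by positivity)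
    rw [hg_val] at h1
    have h2 : (1/δ) * (u ^ (1/p) * (δ * (X ^ (aexp + 1) / (aexp + 1))))
        = p / (p - 1 - lam) * (u ^ (1/p) * X ^ ((p - 1 - lam)/p)) := by
      rw [ha1eq]
      field_simp
      try ring
    linarith [h1, h2]
  have hψ_lo : c1 * A ≤ ψ := by
    have hum : u - m = δ * X / 2 := by rw [hm_def]; linarith [hulX]
    have h1 : (1/δ) * (K * (u - m)) ≤ ψ := by
      rw [hψ_def]
      exact mul_le_mul_of_nonneg_left hlow (by positivity)
    have h2 : (1/δ) * (K * (u - m)) = c1 * A := by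
      have e1 : (u/2 : ℝ) ^ (1/p) = u ^ (1/p) * (1/2 : ℝ) ^ (1/p) := by
        rw [div_eq_mul_inv, mul_rpow hu0.le (by norm_num)]
        norm_num
      have e2 : ((1 + 1/ε) * X) ^ b = (1 + 1/ε) ^ b * X ^ b := by
        rw [mul_rpow (by positivity) hX.le]
      have e3 : X ^ b * X ^ ce * X = X ^ ((p - 1 - lam)/p) := by
        rw [show (p - 1 - lam)/p = b + ce + 1 by rw [hb_def, hce_def]; field_simp; ring,
          rpow_add hX, rpow_add hX, rpow_one]
      rw [hum, hK_def, hc1_def, hA_def, e1, e2, ← e3]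
      field_simp
      try ring
    linarith
  have hψ_nn : 0 ≤ ψ := le_trans (by positivity) hψ_lo
  -- A ^ ρ equals target
  have hAρ : A ^ ρ = u ^ (1/(p - 1 - lam)) * X := by
    rw [hA_def, mul_rpow (rpow_nonneg hu0.le _) (rpow_nonneg hX.le _)]
    rw [← rpow_mul hu0.le, ← rpow_mul hX.le]
    congr 1
    · congr 1
      rw [hρ_def]; field_simp
    · have h : (p - 1 - lam)/p * ρ = 1 := by rw [hρ_def]; field_simp
      rw [h, rpow_one]
  constructor
  · calc min (ρ ^ (-ρ)) (c1 ^ (-ρ)) * ψ ^ ρ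
        ≤ ρ ^ (-ρ) * ψ ^ ρ :=
          mul_le_mul_of_nonneg_right (min_le_left _ _) (rpow_nonneg hψ_nn _)
      _ ≤ ρ ^ (-ρ) * ((ρ * A) ^ ρ) := by
          apply mul_le_mul_of_nonneg_left _ (rpow_nonneg hρ.le _)
          exact rpow_le_rpow hψ_nn hψ_up hρ.le
      _ = A ^ ρ := by
          rw [mul_rpow hρ.le hA.le, ← mul_assoc, ← rpow_add hρ]
          simp
      _ = u ^ (1/(p - 1 - lam)) * X := hAρ
  · calc u ^ (1/(p - 1 - lam)) * X = A ^ ρ := hAρ.symm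
      _ = c1 ^ (-ρ) * ((c1 * A) ^ ρ) := by
          rw [mul_rpow hc1.le hA.le, ← mul_assoc, ← rpow_add hc1]
          simp
      _ ≤ c1 ^ (-ρ) * ψ ^ ρ := by
          apply mul_le_mul_of_nonneg_left _ (rpow_nonneg hc1.le _)
          exact rpow_le_rpow (by positivity) hψ_lo hρ.le
      _ ≤ max (ρ ^ (-ρ)) (c1 ^ (-ρ)) * ψ ^ ρ :=
          mul_le_mul_of_nonneg_right (le_max_right _ _) (rpow_nonneg hψ_nn _)
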